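/- Let b be a real-valued random variable on a probability space whose law is symmetric about zero (b and -b have the same distribution) and suppose E[cos(b)] > 0. Let beta2 be a real number with -pi < beta2 <= pi. Then the two-argument arctangent atan2(E[sin(beta2 + b)], E[cos(beta2 + b)]) equals beta2; equivalently, the argument of the complex number E[cos(beta2+b)] + i*E[sin(beta2+b)] equals beta2. -/
import Mathlib


open MeasureTheory

/-- Unbiased phase-shift conclusion after Corollary 1: if the law of `b` is symmetric about
zero and `E[cos b] > 0`, then for `beta2 ∈ (-π, π]` the two-argument arctangent
`atan2(E[sin(beta2 + b)], E[cos(beta2 + b)])`, realized as the argument of the complex number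
`E[cos(beta2 + b)] + i * E[sin(beta2 + b)]`, equals `beta2`. -/
theorem symmetric_law_phase_shift_unbiased
    {Ω : Type*} [MeasurableSpace Ω] (P : Measure Ω) [IsProbabilityMeasure P]
    (b : Ω → ℝ) (hb : Measurable b)
    (hsym : Measure.map b P = Measure.map (fun ω => -b ω) P)
    (hcos : 0 < ∫ ω, Real.cos (b ω) ∂P)
    (beta2 : ℝ) (h1 : -Real.pi < beta2) (h2 : beta2 ≤ Real.pi) :
    Complex.arg (((∫ ω, Real.cos (beta2 + b ω) ∂P : ℝ) : ℂ) +
        Complex.I * ((∫ ω, Real.sin (beta2 + b ω) ∂P : ℝ) : ℂ)) = beta2 := by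
  have hic : Integrable (fun ω => Real.cos (b ω)) P := by
    apply Integrable.mono' (integrable_const 1)
      ((Real.measurable_cos.comp hb).aestronglyMeasurable)
    filter_upwards with ω
    exact Real.abs_cos_le_one _
  have his : Integrable (fun ω => Real.sin (b ω)) P := by
    apply Integrable.mono' (integrable_const 1)
      ((Real.measurable_sin.comp hb).aestronglyMeasurable)
    filter_upwards with ω
    exact Real.abs_sin_le_one _
  have hsin0 : ∫ ω, Real.sin (b ω) ∂P = 0 := by
    have h1' : ∫ ω, Real.sin (b ω) ∂P = ∫ x, Real.sin x ∂(Measure.map b P) :=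
      (integral_map hb.aemeasurable Real.measurable_sin.aestronglyMeasurable).symm
    have h2' : ∫ x, Real.sin x ∂(Measure.map (fun ω => -b ω) P)
        = ∫ ω, Real.sin (-b ω) ∂P :=
      integral_map hb.neg.aemeasurable Real.measurable_sin.aestronglyMeasurable
    have key : ∫ ω, Real.sin (b ω) ∂P = ∫ ω, -Real.sin (b ω) ∂P := by
      rw [h1', hsym, h2']
      simp only [Real.sin_neg]
    rw [integral_neg] at key
    linarith
  have hcexp : (∫ ω, Real.cos (beta2 + b ω) ∂P)
      = Real.cos beta2 * ∫ ω, Real.cos (b ω) ∂P := by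
    have : ∀ ω, Real.cos (beta2 + b ω)
        = Real.cos beta2 * Real.cos (b ω) - Real.sin beta2 * Real.sin (b ω) := by
      intro ω; rw [Real.cos_add]
    simp_rw [this]
    rw [integral_sub (hic.const_mul _) (his.const_mul _), integral_const_mul,
      integral_const_mul, hsin0]
    ring
  have hsexp : (∫ ω, Real.sin (beta2 + b ω) ∂P)
      = Real.sin beta2 * ∫ ω, Real.cos (b ω) ∂P := by
    have : ∀ ω, Real.sin (beta2 + b ω)
        = Real.sin beta2 * Real.cos (b ω) + Real.cos beta2 * Real.sin (b ω) := by
      intro ω; rw [Real.sin_add]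
    simp_rw [this]
    rw [integral_add (hic.const_mul _) (his.const_mul _), integral_const_mul,
      integral_const_mul, hsin0]
    ring
  rw [hcexp, hsexp]
  have : (((Real.cos beta2 * ∫ ω, Real.cos (b ω) ∂P : ℝ)) : ℂ) +
      Complex.I * ((Real.sin beta2 * ∫ ω, Real.cos (b ω) ∂P : ℝ) : ℂ)
      = ((∫ ω, Real.cos (b ω) ∂P : ℝ) : ℂ) *
        (((Real.cos beta2 : ℝ) : ℂ) + ((Real.sin beta2 : ℝ) : ℂ) * Complex.I) := by
    push_cast
    ring
  rw [this, Complex.arg_real_mul _ hcos, Complex.ofReal_cos, Complex.ofReal_sin,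
    Complex.arg_cos_add_sin_mul_I ⟨h1, h2⟩]
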